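/- Monotone step inequality: for all k, n ≥ 1, F(k + n, n) ≥ F(k, n) + 1, where F is the optimal worst-case number of guesses in Clear Mastermind with n positions and the given number of colors. -/

import Mathlib

attribute [local instance] Classical.propDecidable

namespace CM

/-- Wordle-style feedback symbols: Green, Yellow, Black. -/
inductive Fbk | G | Y | B
deriving DecidableEq

variable {k n : ℕ}

/-- The multiset of values of the answer `y` at positions not exactly matched
by the guess `x`. -/
def misses (x y : Fin n → Fin k) : Multiset (Fin k) :=
  (Finset.univ.filter (fun i => x i ≠ y i)).val.map y

/-- The multiset of still-unmatched answer values after greedily processing the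
first `j` positions of the guess left to right. -/
def fbState (x y : Fin n → Fin k) : ℕ → Multiset (Fin k)
  | 0 => misses x y
  | j + 1 =>
    if h : j < n then
      if x ⟨j, h⟩ = y ⟨j, h⟩ then fbState x y j
      else if x ⟨j, h⟩ ∈ fbState x y j then (fbState x y j).erase (x ⟨j, h⟩)
      else fbState x y j
    else fbState x y j

/-- Wordle-style feedback: `G` for an exact match, otherwise `Y` if the guessed
value occurs among the remaining unmatched values of the answer (consumed
greedily left to right), and `B` otherwise. -/
def feedback (x y : Fin n → Fin k) (i : Fin n) : Fbk :=
  if x i = y i then Fbk.G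
  else if x i ∈ fbState x y i.val then Fbk.Y
  else Fbk.B

/-- A codebreaker strategy: the next guess as a function of the feedback
received so far. -/
def Strategy (k n : ℕ) : Type :=
  List (Fin n → Fbk) → (Fin n → Fin k)

/-- The feedback history after `r` rounds of playing strategy `S` against
secret `y`. -/
def hist (S : Strategy k n) (y : Fin n → Fin k) : ℕ → List (Fin n → Fbk)
  | 0 => []
  | r + 1 => hist S y r ++ [feedback (S (hist S y r)) y]

/-- The guess made by strategy `S` in round `r` (0-indexed) against secret `y`. -/
def guess (S : Strategy k n) (y : Fin n → Fin k) (r : ℕ) : Fin n → Fin k :=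
  S (hist S y r)

/-- `S` wins within `m` rounds: against every secret, one of the first `m`
guesses equals the secret. -/
def WinsIn (S : Strategy k n) (m : ℕ) : Prop :=
  ∀ y : Fin n → Fin k, ∃ r < m, guess S y r = y

/-- `F k n`: the least `m` such that some codebreaker strategy wins the Clear
Mastermind game with `k` colors and `n` positions within `m` rounds. -/
noncomputable def F (k n : ℕ) : ℕ :=
  sInf {m | ∃ S : Strategy k n, WinsIn S m}

end CM

namespace CM


lemma hist_length (S : Strategy k n) (y : Fin n → Fin k) (r : ℕ) :
    (hist S y r).length = r := by
  induction r with
  | zero => rfl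
  | succ r ih => simp [hist, ih]

lemma fbState_le_misses (x y : Fin n → Fin k) (j : ℕ) :
    fbState x y j ≤ misses x y := by
  induction j with
  | zero => exact le_rfl
  | succ j ih =>
    rw [fbState]
    split
    · split
      · exact ih
      · split
        · exact le_trans (Multiset.erase_le _ _) ih
        · exact ih
    · exact ih

lemma feedback_G_iff (x y : Fin n → Fin k) (i : Fin n) :
    feedback x y i = Fbk.G ↔ x i = y i := by
  unfold feedback; split <;> simp_all; split <;> simp

lemma feedback_Y_iff (x y : Fin n → Fin k) (i : Fin n) :
    feedback x y i = Fbk.Y ↔ x i ≠ y i ∧ x i ∈ fbState x y i.val := by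
  unfold feedback; split
  · simp_all
  · split <;> simp_all

lemma feedback_B_iff (x y : Fin n → Fin k) (i : Fin n) :
    feedback x y i = Fbk.B ↔ x i ≠ y i ∧ x i ∉ fbState x y i.val := by
  unfold feedback; split
  · simp_all
  · split <;> simp_all


end CM

namespace CM2

open CM

variable {k n K : ℕ}

noncomputable def cOf (e : Fin k → Fin K) (d0 : Fin k) (x : Fin n → Fin K) (i : Fin n) : Fin k :=
  if h : ∃ a, e a = x i then h.choose else d0

lemma cOf_spec (e : Fin k → Fin K) (d0 : Fin k) (x : Fin n → Fin K) (i : Fin n)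
    (h : ∃ a, e a = x i) : e (cOf e d0 x i) = x i := by
  unfold cOf; rw [dif_pos h]; exact h.choose_spec

lemma cOf_comp (e : Fin k → Fin K) (he : Function.Injective e) (d0 : Fin k)
    (y : Fin n → Fin k) : cOf e d0 (fun i => e (y i)) = y := by
  funext i
  have h : ∃ a, e a = (fun i => e (y i)) i := ⟨y i, rfl⟩
  exact he (cOf_spec e d0 _ i h)

noncomputable def corr (e : Fin k → Fin K) (d0 : Fin k) (x : Fin n → Fin K)
    (f : Fin n → Fbk) : ℕ → Multiset (Fin k)
  | 0 => ((Finset.univ.filter (fun i => (¬ ∃ a, e a = x i) ∧ f i = Fbk.G)).val.map (cOf e d0 x))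
  | j + 1 =>
    if h : j < n then
      if ∃ a, e a = x ⟨j, h⟩ then
        if f ⟨j, h⟩ = Fbk.B ∧ cOf e d0 x ⟨j, h⟩ ∈ corr e d0 x f j then
          (corr e d0 x f j).erase (cOf e d0 x ⟨j, h⟩)
        else corr e d0 x f j
      else
        if f ⟨j, h⟩ = Fbk.Y then cOf e d0 x ⟨j, h⟩ ::ₘ corr e d0 x f j
        else corr e d0 x f j
    else corr e d0 x f j

noncomputable def trf (e : Fin k → Fin K) (d0 : Fin k) (x : Fin n → Fin K)
    (f : Fin n → Fbk) (i : Fin n) : Fbk :=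
  if ∃ a, e a = x i then
    if f i = Fbk.G then Fbk.G
    else if f i = Fbk.Y ∨ cOf e d0 x i ∈ corr e d0 x f i.val then Fbk.Y
    else Fbk.B
  else Fbk.B

lemma filter_split {α β : Type*} (s : Multiset α) (p q r : α → Prop)
    [DecidablePred p] [DecidablePred q] [DecidablePred r]
    (hpq : ∀ a, ¬(p a ∧ q a)) (hr : ∀ a, r a ↔ p a ∨ q a) (v : α → β) :
    (s.filter r).map v = (s.filter p).map v + (s.filter q).map v := by
  rw [← Multiset.map_add, Multiset.filter_add_filter]
  have h1 : Multiset.filter (fun a => p a ∧ q a) s = 0 :=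
    Multiset.filter_eq_nil.2 (fun a _ => hpq a)
  have h2 : Multiset.filter (fun a => p a ∨ q a) s = Multiset.filter r s :=
    Multiset.filter_congr (fun a _ => by rw [hr a])
  rw [h1, h2, add_zero]

lemma corr_spec (e : Fin k → Fin K) (he : Function.Injective e) (d0 : Fin k)
    (x : Fin n → Fin K) (y : Fin n → Fin k) (j : ℕ) :
    fbState x (fun i => e (y i)) j
      = (fbState (cOf e d0 x) y j
          + corr e d0 x (feedback (cOf e d0 x) y) j).map e := by
  set g := cOf e d0 x with hg
  set f := feedback g y with hf
  induction j with
  | zero =>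
    show misses x (fun i => e (y i)) = (misses g y + corr e d0 x f 0).map e
    have hK : corr e d0 x f 0
        = (Finset.univ.filter (fun i => (¬ ∃ a, e a = x i) ∧ f i = Fbk.G)).val.map y := by
      show Multiset.map g _ = _
      refine Multiset.map_congr rfl ?_
      intro i hi
      rw [Finset.mem_val, Finset.mem_filter] at hi
      exact (feedback_G_iff g y i).1 hi.2.2
    unfold misses
    have key := filter_split Finset.univ.val
        (fun i => g i ≠ y i) (fun i => (¬ ∃ a, e a = x i) ∧ f i = Fbk.G)
        (fun i => x i ≠ e (y i))
        (fun i => by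
          rintro ⟨h1, -, h2⟩
          exact h1 ((feedback_G_iff g y i).1 h2))
        (fun i => by
          constructor
          · intro hb
            by_cases hA : ∃ a, e a = x i
            · left
              intro hc
              exact hb ((cOf_spec e d0 x i hA).symm.trans (congrArg e hc))
            · by_cases hG : f i = Fbk.G
              · exact Or.inr ⟨hA, hG⟩
              · exact Or.inl fun hc => hG ((feedback_G_iff g y i).2 hc)
          · rintro (h1 | ⟨h1, -⟩)
            · intro hc
              exact h1 (he ((cOf_spec e d0 x i ⟨y i, hc.symm⟩).trans hc))
            · exact fun hc => h1 ⟨y i, hc.symm⟩) y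
    rw [hK, Finset.filter_val, Finset.filter_val, Finset.filter_val, ← key,
      Multiset.map_map]
    rfl
  | succ j ih =>
    by_cases h : j < n
    · have hij : ((⟨j, h⟩ : Fin n) : ℕ) = j := rfl
      by_cases hA : ∃ a, e a = x ⟨j, h⟩
      · have hxg : x ⟨j, h⟩ = e (g ⟨j, h⟩) := (cOf_spec e d0 x _ hA).symm
        by_cases hm : g ⟨j, h⟩ = y ⟨j, h⟩
        · have h1 : x ⟨j, h⟩ = e (y ⟨j, h⟩) := by rw [hxg, hm]
          have hfG : f ⟨j, h⟩ = Fbk.G := (feedback_G_iff g y _).2 hm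
          simp only [fbState, corr, dif_pos h]
          rw [if_pos h1, if_pos hm, if_pos hA, if_neg (by simp [hfG])]
          exact ih
        · have h1 : x ⟨j, h⟩ ≠ e (y ⟨j, h⟩) := by
            rw [hxg]; exact fun hc => hm (he hc)
          have hYiff : f ⟨j, h⟩ = Fbk.Y ↔ g ⟨j, h⟩ ∈ fbState g y j := by
            rw [hf, feedback_Y_iff]
            simp [hm]
          simp only [fbState, corr, dif_pos h]
          rw [if_neg h1, if_pos hA]
          by_cases hsm : g ⟨j, h⟩ ∈ fbState g y j
          · have hfY : f ⟨j, h⟩ = Fbk.Y := hYiff.2 hsm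
            have hbig : x ⟨j, h⟩ ∈ fbState x (fun i => e (y i)) j := by
              rw [ih, hxg, Multiset.mem_map_of_injective he, Multiset.mem_add]
              exact Or.inl hsm
            rw [if_pos hbig, if_neg hm, if_pos hsm, if_neg (by simp [hfY])]
            rw [ih, hxg, ← Multiset.map_erase e he,
              Multiset.erase_add_left_pos _ hsm]
          · have hfB : f ⟨j, h⟩ = Fbk.B := by
              rw [hf, feedback_B_iff]
              exact ⟨hm, hsm⟩
            by_cases hE : g ⟨j, h⟩ ∈ corr e d0 x f j
            · have hbig : x ⟨j, h⟩ ∈ fbState x (fun i => e (y i)) j := by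
                rw [ih, hxg, Multiset.mem_map_of_injective he, Multiset.mem_add]
                exact Or.inr hE
              rw [if_pos hbig, if_neg hm, if_neg hsm, if_pos ⟨hfB, hE⟩]
              rw [ih, hxg, ← Multiset.map_erase e he,
                Multiset.erase_add_right_pos _ hE]
            · have hbig : x ⟨j, h⟩ ∉ fbState x (fun i => e (y i)) j := by
                rw [ih, hxg, Multiset.mem_map_of_injective he, Multiset.mem_add]
                tauto
              rw [if_neg hbig, if_neg hm, if_neg hsm,
                if_neg (fun hc => hE hc.2)]
              exact ih
      · have h1 : x ⟨j, h⟩ ≠ e (y ⟨j, h⟩) := fun hc => hA ⟨y ⟨j, h⟩, hc.symm⟩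
        have hbig : x ⟨j, h⟩ ∉ fbState x (fun i => e (y i)) j := by
          rw [ih]
          intro hc
          obtain ⟨a, -, ha⟩ := Multiset.mem_map.1 hc
          exact hA ⟨a, ha⟩
        simp only [fbState, corr, dif_pos h]
        rw [if_neg h1, if_neg hbig, if_neg hA]
        by_cases hm : g ⟨j, h⟩ = y ⟨j, h⟩
        · have hfG : f ⟨j, h⟩ = Fbk.G := (feedback_G_iff g y _).2 hm
          rw [if_pos hm, if_neg (by simp [hfG])]
          exact ih
        · by_cases hsm : g ⟨j, h⟩ ∈ fbState g y j
          · have hfY : f ⟨j, h⟩ = Fbk.Y := by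
              rw [hf, feedback_Y_iff]
              exact ⟨hm, hsm⟩
            rw [if_neg hm, if_pos hsm, if_pos hfY, ih, Multiset.add_cons,
              ← Multiset.cons_add, Multiset.cons_erase hsm]
          · have hfB : f ⟨j, h⟩ = Fbk.B := by
              rw [hf, feedback_B_iff]
              exact ⟨hm, hsm⟩
            rw [if_neg hm, if_neg hsm, if_neg (by simp [hfB])]
            exact ih
    · simp only [fbState, corr, dif_neg h]
      exact ih

lemma trf_spec (e : Fin k → Fin K) (he : Function.Injective e) (d0 : Fin k)
    (x : Fin n → Fin K) (y : Fin n → Fin k) :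
    feedback x (fun i => e (y i)) = trf e d0 x (feedback (cOf e d0 x) y) := by
  funext i
  set g := cOf e d0 x with hg
  set f := feedback g y with hf
  have hst := corr_spec e he d0 x y i.val
  unfold feedback trf
  by_cases hA : ∃ a, e a = x i
  · have hxg : x i = e (g i) := (cOf_spec e d0 x i hA).symm
    rw [if_pos hA]
    by_cases hm : g i = y i
    · have : x i = e (y i) := by rw [hxg, hm]
      rw [if_pos this, if_pos ((feedback_G_iff g y i).2 hm)]
    · have hne : x i ≠ e (y i) := by rw [hxg]; exact fun hc => hm (he hc)
      rw [if_neg hne]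
      have hfG : f i ≠ Fbk.G := by rw [hf]; simp [feedback_G_iff, hm]
      have hmem : (x i ∈ fbState x (fun i => e (y i)) i.val)
          ↔ (f i = Fbk.Y ∨ g i ∈ corr e d0 x f i.val) := by
        rw [hst, hxg, Multiset.mem_map_of_injective he, Multiset.mem_add,
          feedback_Y_iff]
        simp [hm, hg, hf, show ¬ cOf e d0 x i = y i from hm]
      by_cases hY : x i ∈ fbState x (fun i => e (y i)) i.val
      · rw [if_pos hY, if_neg hfG, if_pos (hmem.1 hY)]
      · rw [if_neg hY, if_neg hfG, if_neg (fun hc => hY (hmem.2 hc))]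
  · have hne : x i ≠ e (y i) := fun hc => hA ⟨y i, hc.symm⟩
    rw [if_neg hA, if_neg hne, if_neg]
    rw [hst]
    intro hc
    obtain ⟨a, _, ha⟩ := Multiset.mem_map.1 hc
    exact hA ⟨a, ha⟩

lemma round0 (g0 : Fin n → Fin K) (e : Fin k → Fin K)
    (hav : ∀ a i, e a ≠ g0 i) (y : Fin n → Fin k) :
    feedback g0 (fun i => e (y i)) = fun _ => Fbk.B := by
  funext i
  have h1 : g0 i ≠ e (y i) := fun hc => hav (y i) i hc.symm
  have h2 : g0 i ∉ fbState g0 (fun i => e (y i)) i.val := by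
    intro hc
    have hm := Multiset.mem_of_le
      (fbState_le_misses g0 (fun i => e (y i)) i.val) hc
    unfold misses at hm
    obtain ⟨a, -, ha⟩ := Multiset.mem_map.1 hm
    exact hav (y a) i ha
  rw [feedback, if_neg h1, if_neg h2]

noncomputable def bigHist (S : Strategy K n) (e : Fin k → Fin K) (d0 : Fin k)
    (h : List (Fin n → Fbk)) : List (Fin n → Fbk) :=
  h.foldl (fun bh fb => bh ++ [trf e d0 (S bh) fb]) [fun _ => Fbk.B]

noncomputable def T (S : Strategy K n) (e : Fin k → Fin K) (d0 : Fin k) :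
    Strategy k n :=
  fun h => cOf e d0 (S (bigHist S e d0 h))

lemma bigHist_append (S : Strategy K n) (e : Fin k → Fin K) (d0 : Fin k)
    (h : List (Fin n → Fbk)) (fb : Fin n → Fbk) :
    bigHist S e d0 (h ++ [fb])
      = bigHist S e d0 h ++ [trf e d0 (S (bigHist S e d0 h)) fb] := by
  unfold bigHist
  rw [List.foldl_append, List.foldl_cons, List.foldl_nil]

lemma bigHist_hist (S : Strategy K n) (e : Fin k → Fin K)
    (he : Function.Injective e) (d0 : Fin k)
    (hav : ∀ a i, e a ≠ S [] i) (y : Fin n → Fin k) (r : ℕ) :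
    bigHist S e d0 (hist (T S e d0) y r) = hist S (fun i => e (y i)) (r + 1) := by
  induction r with
  | zero =>
    show [fun _ => Fbk.B] = [] ++ [feedback (S []) (fun i => e (y i))]
    rw [round0 (S []) e hav y]
    rfl
  | succ r ih =>
    have step := bigHist_append S e d0 (hist (T S e d0) y r)
      (feedback ((T S e d0) (hist (T S e d0) y r)) y)
    have hT : (T S e d0) (hist (T S e d0) y r)
        = cOf e d0 (S (hist S (fun i => e (y i)) (r + 1))) := by
      show cOf e d0 (S (bigHist S e d0 (hist (T S e d0) y r))) = _
      rw [ih]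
    show bigHist S e d0
        (hist (T S e d0) y r ++ [feedback ((T S e d0) (hist (T S e d0) y r)) y])
      = hist S (fun i => e (y i)) (r + 1)
        ++ [feedback (S (hist S (fun i => e (y i)) (r + 1))) (fun i => e (y i))]
    rw [step, ih, hT, ← trf_spec e he d0]

lemma T_wins (S : Strategy K n) (m : ℕ) (hS : WinsIn S m)
    (e : Fin k → Fin K) (he : Function.Injective e) (d0 : Fin k)
    (hav : ∀ a i, e a ≠ S [] i) (hn : 1 ≤ n) :
    WinsIn (T S e d0) (m - 1) := by
  intro y
  obtain ⟨r, hr, hguess⟩ := hS (fun i => e (y i))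
  match r, hr, hguess with
  | 0, hr, hguess =>
    exfalso
    have h0 : S [] = fun i => e (y i) := hguess
    exact hav (y ⟨0, hn⟩) ⟨0, hn⟩ (by rw [h0])
  | r + 1, hr, hguess =>
    refine ⟨r, by omega, ?_⟩
    show cOf e d0 (S (bigHist S e d0 (hist (T S e d0) y r))) = y
    rw [bigHist_hist S e he d0 hav y r]
    have hg : S (hist S (fun i => e (y i)) (r + 1)) = fun i => e (y i) := hguess
    rw [hg, cOf_comp e he d0]

lemma exists_win (k n : ℕ) (hk : 1 ≤ k) :
    ∃ m, ∃ S : Strategy k n, WinsIn S m := by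
  have hne : Nonempty (Fin k) := ⟨⟨0, hk⟩⟩
  have hpos : 0 < Fintype.card (Fin n → Fin k) := Fintype.card_pos
  set c := Fintype.card (Fin n → Fin k) with hc
  let E := Fintype.equivFin (Fin n → Fin k)
  let L : ℕ → (Fin n → Fin k) := fun t => E.symm ⟨t % c, Nat.mod_lt t hpos⟩
  refine ⟨c, fun h => L h.length, ?_⟩
  intro y
  refine ⟨(E y).val, (E y).isLt, ?_⟩
  show L (hist (fun h => L h.length) y (E y).val).length = y
  rw [show (hist (fun h => L h.length) y (E y).val).length = (E y).val from hist_length _ _ _]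
  show E.symm ⟨(E y).val % c, _⟩ = y
  have hfin : (⟨(E y).val % c, Nat.mod_lt _ hpos⟩ : Fin c) = E y :=
    Fin.ext (Nat.mod_eq_of_lt (E y).isLt)
  rw [hfin, Equiv.symm_apply_apply]

lemma exists_emb (k n : ℕ) (g0 : Fin n → Fin (k + n)) :
    ∃ e : Fin k → Fin (k + n), Function.Injective e ∧ ∀ a i, e a ≠ g0 i := by
  classical
  set s : Finset (Fin (k + n)) := Finset.image g0 Finset.univ with hsdef
  have hs : s.card ≤ n := le_trans Finset.card_image_le (by simp)
  have hcard : sᶜ.card = (k + n) - s.card := by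
    rw [Finset.card_compl]
    simp
  have hcompl : k ≤ Fintype.card {a // a ∈ sᶜ} := by
    rw [Fintype.card_coe]
    omega
  obtain ⟨f⟩ := Function.Embedding.nonempty_of_card_le
    (α := Fin k) (β := {a // a ∈ sᶜ}) (by simpa using hcompl)
  refine ⟨fun a => (f a).val, ?_, ?_⟩
  · intro a b hab
    exact f.injective (Subtype.ext hab)
  · intro a i hc
    have hmem := (f a).2
    rw [Finset.mem_compl] at hmem
    exact hmem (Finset.mem_image.2 ⟨i, Finset.mem_univ i, hc.symm⟩)

end CM2

open CM CM2 in
theorem stmt18_aux (k n : ℕ) (hk : 1 ≤ k) (hn : 1 ≤ n) :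
    CM.F k n + 1 ≤ CM.F (k + n) n := by
  have hne : {m | ∃ S : Strategy (k + n) n, WinsIn S m}.Nonempty := by
    obtain ⟨m, S, hS⟩ := exists_win (k + n) n (by omega)
    exact ⟨m, S, hS⟩
  have hmem : ∃ S : Strategy (k + n) n, WinsIn S (F (k + n) n) :=
    Nat.sInf_mem hne
  obtain ⟨S, hS⟩ := hmem
  have hm1 : 1 ≤ F (k + n) n := by
    by_contra h
    obtain ⟨r, hr, -⟩ := hS (fun _ => ⟨0, by omega⟩)
    omega
  obtain ⟨e, he, hav⟩ := exists_emb k n (S [])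
  have hT : WinsIn (T S e ⟨0, hk⟩) (F (k + n) n - 1) :=
    T_wins S (F (k + n) n) hS e he ⟨0, hk⟩ hav hn
  have hle : F k n ≤ F (k + n) n - 1 :=
    Nat.sInf_le ⟨T S e ⟨0, hk⟩, hT⟩
  omega


/-- Monotone step inequality: `F(k + n, n) ≥ F(k, n) + 1`. -/
theorem stmt18 (k n : ℕ) (hk : 1 ≤ k) (hn : 1 ≤ n) :
    CM.F k n + 1 ≤ CM.F (k + n) n :=
  stmt18_aux k n hk hn
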